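/- Let x₁, …, xₙ ∈ ℝ and v₁, …, v_{n−1} ∈ ℝ be fixed phantom points. The mechanism mapping (x₁, …, xₙ) to the median of the multiset {x₁, …, xₙ, v₁, …, v_{n−1}} (of size 2n − 1) is strategyproof: for every agent i, every misreport xᵢ', and every profile of the other agents' reports, |med(x₁,…,xᵢ,…,xₙ, v⃗) − xᵢ| ≤ |med(x₁,…,xᵢ',…,xₙ, v⃗) − xᵢ|. -/

import Mathlib

open List

private lemma sp_sorted_head_le {c : ℝ} {t : List ℝ} (h : (c :: t).Pairwise (· ≤ ·))
    (k : ℕ) (hk : k < (c :: t).length) : c ≤ (c :: t).getD k 0 := by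
  rw [List.getD_eq_getElem _ _ hk]
  rcases k with _ | k
  · simp
  · have hk' : k < t.length := by simpa using hk
    have : (c :: t)[k + 1] = t[k] := by simp
    rw [this]
    exact (List.pairwise_cons.mp h).1 _ (List.getElem_mem _)

private lemma sp_key (y : ℝ) : ∀ (t : List ℝ), t.Pairwise (· ≤ ·) → ∀ k, k + 1 < t.length →
    (t.orderedInsert (· ≤ ·) y).getD (k + 1) 0
      = max (t.getD k 0) (min (t.getD (k + 1) 0) y) := by
  intro t
  induction t with
  | nil => intro _ k hk; simp at hk
  | cons c t ih =>
    intro hs k hk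
    by_cases hyc : y ≤ c
    · rw [List.orderedInsert, if_pos hyc]
      have h1 : y ≤ (c :: t).getD (k + 1) 0 :=
        hyc.trans (sp_sorted_head_le hs (k + 1) hk)
      have h2 : y ≤ (c :: t).getD k 0 :=
        hyc.trans (sp_sorted_head_le hs k (by omega))
      rw [List.getD_cons_succ, min_eq_right h1, max_eq_left h2]
    · rw [List.orderedInsert, if_neg hyc, List.getD_cons_succ]
      push_neg at hyc
      rcases k with _ | j
      · -- t must be nonempty
        rcases t with _ | ⟨d, t'⟩
        · simp at hk
        have hcd : c ≤ d := (List.pairwise_cons.mp hs).1 _ (by simp)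
        rw [List.orderedInsert]
        by_cases hyd : y ≤ d
        · rw [if_pos hyd]
          simp only [List.getD_cons_zero, List.getD_cons_succ]
          rw [min_eq_right hyd, max_eq_right hyc.le]
        · rw [if_neg hyd]
          push_neg at hyd
          simp only [List.getD_cons_zero, List.getD_cons_succ]
          rw [min_eq_left hyd.le, max_eq_right hcd]
      · have ht : t.Pairwise (· ≤ ·) := (List.pairwise_cons.mp hs).2
        have hj : j + 1 < t.length := by simp at hk; omega
        rw [ih ht j hj, List.getD_cons_succ, List.getD_cons_succ]

private lemma sp_sort_congr {l₁ l₂ : List ℝ} (h : l₁ ~ l₂) :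
    l₁.insertionSort (· ≤ ·) = l₂.insertionSort (· ≤ ·) :=
  List.Perm.eq_of_pairwise'
    (List.pairwise_insertionSort _ _) (List.pairwise_insertionSort _ _)
    ((l₁.perm_insertionSort _).trans (h.trans (l₂.perm_insertionSort _).symm))

private lemma sp_clamp (a b x y : ℝ) (hab : a ≤ b) :
    |max a (min b x) - x| ≤ |max a (min b y) - x| := by
  have hc1 : a ≤ max a (min b y) := le_max_left _ _
  have hc2 : max a (min b y) ≤ b := max_le hab (min_le_left _ _)
  rcases le_total x a with h1 | h1
  · rw [min_eq_right (h1.trans hab), max_eq_left h1, abs_of_nonneg (by linarith)]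
    calc a - x ≤ max a (min b y) - x := by linarith
    _ ≤ |max a (min b y) - x| := le_abs_self _
  · rcases le_total x b with h2 | h2
    · rw [min_eq_right h2, max_eq_right h1]
      simp [abs_nonneg]
    · rw [min_eq_left h2, max_eq_right hab, abs_of_nonpos (by linarith)]
      calc -(b - x) = x - b := by ring
      _ ≤ x - max a (min b y) := by linarith
      _ ≤ |x - max a (min b y)| := le_abs_self _
      _ = |max a (min b y) - x| := abs_sub_comm _ _

theorem stmt16 (n : ℕ) (hn : 0 < n) (v : Fin (n - 1) → ℝ)
    (med : (Fin n → ℝ) → ℝ)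
    (hmed : ∀ r : Fin n → ℝ,
      med r = ((List.ofFn r ++ List.ofFn v).insertionSort (· ≤ ·)).getD (n - 1) 0) :
    ∀ (r : Fin n → ℝ) (i : Fin n) (x' : ℝ),
      |med r - r i| ≤ |med (Function.update r i x') - r i| := by
  intro r i x'
  match n, hn, v, med, hmed, r, i with
  | 1, hn, v, med, hmed, r, i =>
    have h0 : med r = r 0 := by
      rw [hmed]
      have hv : List.ofFn v = [] := by simp
      simp [hv, List.ofFn_succ, List.insertionSort]
    have hi : i = 0 := Subsingleton.elim i 0
    rw [h0, hi]
    simp [abs_nonneg]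
  | (m + 2), hn, v, med, hmed, r, i =>
    set l₀ : List ℝ := (List.ofFn r).eraseIdx i ++ List.ofFn v with hl₀
    set t : List ℝ := l₀.insertionSort (· ≤ ·) with ht
    have hts : t.Pairwise (· ≤ ·) := List.pairwise_insertionSort _ _
    have hil : (i : ℕ) < (List.ofFn r).length := by simp [i.isLt]
    have hlen : t.length = 2 * m + 2 := by
      have := i.isLt
      simp [ht, hl₀, List.length_eraseIdx, hil]
      split <;> omega
    have hset : ∀ y : ℝ, List.ofFn (Function.update r i y) = (List.ofFn r).set i y := by
      intro y
      apply List.ext_getElem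
      · simp
      · intro j hj hj'
        have hjn : j < m + 2 := by simp at hj; omega
        rw [List.getElem_set, List.getElem_ofFn, List.getElem_ofFn]
        rw [Function.update_apply]
        by_cases hij : (i : ℕ) = j
        · rw [if_pos hij, if_pos (by exact Fin.ext hij.symm)]
        · rw [if_neg hij, if_neg (fun h => hij (congrArg Fin.val h).symm)]
    have hperm : ∀ y : ℝ,
        (List.ofFn (Function.update r i y) ++ List.ofFn v).Perm (y :: l₀) := by
      intro y
      rw [hset y, hl₀, List.set_eq_take_cons_drop y hil, List.eraseIdx_eq_take_drop_succ]
      calc (List.take (i : ℕ) (List.ofFn r) ++ y :: List.drop ((i : ℕ) + 1) (List.ofFn r))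
              ++ List.ofFn v
            ~ (y :: (List.take (i : ℕ) (List.ofFn r) ++ List.drop ((i : ℕ) + 1) (List.ofFn r)))
              ++ List.ofFn v := List.Perm.append_right _ List.perm_middle
        _ = y :: ((List.take (i : ℕ) (List.ofFn r) ++ List.drop ((i : ℕ) + 1) (List.ofFn r))
              ++ List.ofFn v) := by simp
    have hmed' : ∀ y : ℝ, med (Function.update r i y)
        = max (t.getD m 0) (min (t.getD (m + 1) 0) y) := by
      intro y
      rw [hmed]
      rw [sp_sort_congr (hperm y)]
      have : (y :: l₀).insertionSort (· ≤ ·) = t.orderedInsert (· ≤ ·) y := by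
        rw [ht]; rfl
      rw [this]
      have hidx : m + 2 - 1 = m + 1 := rfl
      rw [hidx]
      exact sp_key y t hts m (by omega)
    have hself : med r = max (t.getD m 0) (min (t.getD (m + 1) 0) (r i)) := by
      have := hmed' (r i)
      rwa [Function.update_eq_self] at this
    have hab : t.getD m 0 ≤ t.getD (m + 1) 0 := by
      have hm : m < t.length := by omega
      have hm1 : m + 1 < t.length := by omega
      rw [List.getD_eq_getElem _ _ hm, List.getD_eq_getElem _ _ hm1]
      exact (List.pairwise_iff_getElem.mp hts) m (m + 1) hm hm1 (by omega)
    rw [hself, hmed' x']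
    exact sp_clamp _ _ _ _ hab
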